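/- Let X be a real normed space, α, β ∈ [0,1) with 0 < α+β < 1, and define the ρ_{α,β}-angle between nonzero u, v by θ_{α,β}(u,v) = arccos( ρ_{α,β}(u,v) / ((α+β)‖u‖‖v‖) ). Then for nonzero scalars a, b: θ_{α,β}(au, bv) = θ_{α,β}(u,v) if ab > 0, and θ_{α,β}(au, bv) = π − θ_{β,α}(u,v) if ab < 0. -/

import Mathlib

noncomputable def rhoP {X : Type*} [NormedAddCommGroup X] [NormedSpace ℝ X] (u v : X) : ℝ :=
  Filter.limUnder (nhdsWithin (0:ℝ) (Set.Ioi 0)) (fun t : ℝ => (‖u + t • v‖^2 - ‖u‖^2) / (2*t))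

noncomputable def rhoM {X : Type*} [NormedAddCommGroup X] [NormedSpace ℝ X] (u v : X) : ℝ :=
  Filter.limUnder (nhdsWithin (0:ℝ) (Set.Iio 0)) (fun t : ℝ => (‖u + t • v‖^2 - ‖u‖^2) / (2*t))

noncomputable def rhoAB {X : Type*} [NormedAddCommGroup X] [NormedSpace ℝ X]
    (α β : ℝ) (u v : X) : ℝ := α * rhoM u v + β * rhoP u v

/-- The ρ_{α,β}-angle between two vectors. -/
noncomputable def thetaAB {X : Type*} [NormedAddCommGroup X] [NormedSpace ℝ X]
    (α β : ℝ) (u v : X) : ℝ :=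
  Real.arccos (rhoAB α β u v / ((α + β) * ‖u‖ * ‖v‖))


open Filter Set

section aux
variable {X : Type*} [NormedAddCommGroup X] [NormedSpace ℝ X]

private lemma gmono (u v : X) :
    MonotoneOn (fun t : ℝ => (‖u + t • v‖^2 - ‖u‖^2) / (2*t)) (Set.univ \ {0}) := by
  have h1 : ConvexOn ℝ Set.univ (fun t : ℝ => ‖u + t • v‖) := by
    have := (convexOn_univ_norm (E := X)).comp_affineMap (AffineMap.lineMap u (u + v))
    simpa [Function.comp_def, AffineMap.lineMap_apply, add_comm] using this
  have hconv : ConvexOn ℝ Set.univ (fun t : ℝ => ‖u + t • v‖ ^ 2) := by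
    exact h1.pow (fun x _ => norm_nonneg _) 2
  have hslope := hconv.slope_mono (Set.mem_univ (0:ℝ))
  have key : ∀ t : ℝ, (‖u + t • v‖^2 - ‖u‖^2) / (2*t)
      = slope (fun t : ℝ => ‖u + t • v‖ ^ 2) 0 t / 2 := by
    intro t
    rw [slope_def_field]
    simp [div_div, mul_comm]
  intro x hx y hy hxy
  simp only [key]
  linarith [hslope hx hy hxy]

private lemma tendsto_rhoP (u v : X) :
    Tendsto (fun t : ℝ => (‖u + t • v‖^2 - ‖u‖^2) / (2*t)) (nhdsWithin 0 (Set.Ioi 0))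
      (nhds (rhoP u v)) := by
  set g : ℝ → ℝ := fun t => (‖u + t • v‖^2 - ‖u‖^2) / (2*t) with hg
  have hmono := gmono u v
  have hmonoIoi : MonotoneOn g (Ioi 0) :=
    hmono.mono (fun t ht => ⟨trivial, ne_of_gt ht⟩)
  have hbdd : BddBelow (g '' Ioi 0) := by
    refine ⟨g (-1), ?_⟩
    rintro _ ⟨t, ht, rfl⟩
    exact hmono ⟨trivial, by norm_num⟩ ⟨trivial, ne_of_gt ht⟩ (by linarith [mem_Ioi.mp ht])
  have h := hmonoIoi.tendsto_nhdsGT hbdd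
  have e : rhoP u v = sInf (g '' Ioi 0) := h.limUnder_eq
  rw [e]; exact h

private lemma tendsto_rhoM (u v : X) :
    Tendsto (fun t : ℝ => (‖u + t • v‖^2 - ‖u‖^2) / (2*t)) (nhdsWithin 0 (Set.Iio 0))
      (nhds (rhoM u v)) := by
  set g : ℝ → ℝ := fun t => (‖u + t • v‖^2 - ‖u‖^2) / (2*t) with hg
  have hmono := gmono u v
  have hmonoIio : MonotoneOn g (Iio 0) :=
    hmono.mono (fun t ht => ⟨trivial, ne_of_lt ht⟩)
  have hbdd : BddAbove (g '' Iio 0) := by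
    refine ⟨g 1, ?_⟩
    rintro _ ⟨t, ht, rfl⟩
    exact hmono ⟨trivial, ne_of_lt ht⟩ ⟨trivial, one_ne_zero⟩ (by linarith [mem_Iio.mp ht])
  have h := hmonoIio.tendsto_nhdsLT hbdd
  have e : rhoM u v = sSup (g '' Iio 0) := h.limUnder_eq
  rw [e]; exact h
end aux
section aux2
open Filter Set
variable {X : Type*} [NormedAddCommGroup X] [NormedSpace ℝ X]

private lemma limUnder_scale (u v : X) {a b : ℝ} (ha : a ≠ 0) (hb : b ≠ 0)
    {l₁ l₂ : Filter ℝ} [l₁.NeBot] (hne : ∀ᶠ t in l₁, t ≠ (0:ℝ))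
    (hsc : Tendsto (fun t : ℝ => (b/a)*t) l₁ l₂) {L : ℝ}
    (hg : Tendsto (fun t : ℝ => (‖u + t • v‖^2 - ‖u‖^2) / (2*t)) l₂ (nhds L)) :
    limUnder l₁ (fun t : ℝ => (‖a • u + t • (b • v)‖^2 - ‖a • u‖^2) / (2*t)) = a*b*L := by
  apply Filter.Tendsto.limUnder_eq
  have h := (hg.comp hsc).const_mul (a*b)
  refine h.congr' ?_
  filter_upwards [hne] with t ht
  have h1 : a • (u + ((b/a)*t) • v) = a • u + t • (b • v) := by
    rw [smul_add, smul_smul, smul_smul, show a*((b/a)*t) = t*b by field_simp]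
  have h2 : ‖a • u + t • (b • v)‖^2 = a^2 * ‖u + ((b/a)*t) • v‖^2 := by
    rw [← h1, norm_smul, Real.norm_eq_abs, mul_pow, sq_abs]
  have h3 : ‖a • u‖^2 = a^2 * ‖u‖^2 := by
    rw [norm_smul, Real.norm_eq_abs, mul_pow, sq_abs]
  simp only [Function.comp_def, h2, h3]
  field_simp

private lemma tendsto_scale_pos {c : ℝ} (hc : 0 < c) :
    Tendsto (fun t : ℝ => c*t) (nhdsWithin 0 (Set.Ioi 0)) (nhdsWithin 0 (Set.Ioi 0)) := by
  apply tendsto_nhdsWithin_of_tendsto_nhds_of_eventually_within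
  · have : Tendsto (fun t : ℝ => c*t) (nhds 0) (nhds (c*0)) :=
      (continuous_const.mul continuous_id).tendsto 0
    simpa using this.mono_left nhdsWithin_le_nhds
  · filter_upwards [self_mem_nhdsWithin] with t ht
    exact mul_pos hc ht

private lemma tendsto_scale_pos' {c : ℝ} (hc : 0 < c) :
    Tendsto (fun t : ℝ => c*t) (nhdsWithin 0 (Set.Iio 0)) (nhdsWithin 0 (Set.Iio 0)) := by
  apply tendsto_nhdsWithin_of_tendsto_nhds_of_eventually_within
  · have : Tendsto (fun t : ℝ => c*t) (nhds 0) (nhds (c*0)) :=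
      (continuous_const.mul continuous_id).tendsto 0
    simpa using this.mono_left nhdsWithin_le_nhds
  · filter_upwards [self_mem_nhdsWithin] with t ht
    exact mul_neg_of_pos_of_neg hc ht

private lemma tendsto_scale_neg {c : ℝ} (hc : c < 0) :
    Tendsto (fun t : ℝ => c*t) (nhdsWithin 0 (Set.Ioi 0)) (nhdsWithin 0 (Set.Iio 0)) := by
  apply tendsto_nhdsWithin_of_tendsto_nhds_of_eventually_within
  · have : Tendsto (fun t : ℝ => c*t) (nhds 0) (nhds (c*0)) :=
      (continuous_const.mul continuous_id).tendsto 0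
    simpa using this.mono_left nhdsWithin_le_nhds
  · filter_upwards [self_mem_nhdsWithin] with t ht
    exact mul_neg_of_neg_of_pos hc ht

private lemma tendsto_scale_neg' {c : ℝ} (hc : c < 0) :
    Tendsto (fun t : ℝ => c*t) (nhdsWithin 0 (Set.Iio 0)) (nhdsWithin 0 (Set.Ioi 0)) := by
  apply tendsto_nhdsWithin_of_tendsto_nhds_of_eventually_within
  · have : Tendsto (fun t : ℝ => c*t) (nhds 0) (nhds (c*0)) :=
      (continuous_const.mul continuous_id).tendsto 0
    simpa using this.mono_left nhdsWithin_le_nhds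
  · filter_upwards [self_mem_nhdsWithin] with t ht
    exact mul_pos_of_neg_of_neg hc ht

private lemma ne_evIoi : ∀ᶠ t in nhdsWithin (0:ℝ) (Set.Ioi 0), t ≠ (0:ℝ) := by
  filter_upwards [self_mem_nhdsWithin] with t ht; exact ne_of_gt ht

private lemma ne_evIio : ∀ᶠ t in nhdsWithin (0:ℝ) (Set.Iio 0), t ≠ (0:ℝ) := by
  filter_upwards [self_mem_nhdsWithin] with t ht; exact ne_of_lt ht

private lemma rhoAB_smul_pos (α β : ℝ) (u v : X) {a b : ℝ} (ha : a ≠ 0) (hb : b ≠ 0)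
    (hab : 0 < a*b) : rhoAB α β (a • u) (b • v) = (a*b) * rhoAB α β u v := by
  have hc : 0 < b/a := by
    have : b/a = (a*b)/(a^2) := by field_simp
    rw [this]; positivity
  have hP : rhoP (a • u) (b • v) = a*b*(rhoP u v) :=
    limUnder_scale u v ha hb ne_evIoi (tendsto_scale_pos hc) (tendsto_rhoP u v)
  have hM : rhoM (a • u) (b • v) = a*b*(rhoM u v) :=
    limUnder_scale u v ha hb ne_evIio (tendsto_scale_pos' hc) (tendsto_rhoM u v)
  rw [rhoAB, rhoAB, hP, hM]; ring

private lemma rhoAB_smul_neg (α β : ℝ) (u v : X) {a b : ℝ} (ha : a ≠ 0) (hb : b ≠ 0)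
    (hab : a*b < 0) : rhoAB α β (a • u) (b • v) = (a*b) * rhoAB β α u v := by
  have hc : b/a < 0 := by
    have : b/a = (a*b)/(a^2) := by field_simp
    rw [this]
    exact div_neg_of_neg_of_pos hab (by positivity)
  have hP : rhoP (a • u) (b • v) = a*b*(rhoM u v) :=
    limUnder_scale u v ha hb ne_evIoi (tendsto_scale_neg hc) (tendsto_rhoM u v)
  have hM : rhoM (a • u) (b • v) = a*b*(rhoP u v) :=
    limUnder_scale u v ha hb ne_evIio (tendsto_scale_neg' hc) (tendsto_rhoP u v)
  rw [rhoAB, rhoAB, hP, hM]; ring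

end aux2
theorem stmt_17 {X : Type*} [NormedAddCommGroup X] [NormedSpace ℝ X]
    (α β : ℝ) (hα : α ∈ Set.Ico (0:ℝ) 1) (hβ : β ∈ Set.Ico (0:ℝ) 1)
    (hab : 0 < α + β) (hab1 : α + β < 1)
    (u v : X) (hu : u ≠ 0) (hv : v ≠ 0) (a b : ℝ) (ha : a ≠ 0) (hb : b ≠ 0) :
    (a * b > 0 → thetaAB α β (a • u) (b • v) = thetaAB α β u v) ∧
    (a * b < 0 → thetaAB α β (a • u) (b • v) = Real.pi - thetaAB β α u v) := by
  constructor
  · intro hpos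
    unfold thetaAB
    rw [rhoAB_smul_pos α β u v ha hb hpos, norm_smul, norm_smul,
      Real.norm_eq_abs, Real.norm_eq_abs]
    congr 1
    have habs : |a| * |b| = a*b := by rw [← abs_mul, abs_of_pos hpos]
    rw [show (α+β)*(|a| * ‖u‖) * (|b| * ‖v‖) = (a*b)*((α+β)*‖u‖*‖v‖) by rw [← habs]; ring,
      mul_div_mul_left _ _ (ne_of_gt hpos)]
  · intro hneg
    unfold thetaAB
    rw [rhoAB_smul_neg α β u v ha hb hneg, norm_smul, norm_smul,
      Real.norm_eq_abs, Real.norm_eq_abs]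
    have habs : |a| * |b| = -(a*b) := by rw [← abs_mul, abs_of_neg hneg]
    rw [show (α+β)*(|a| * ‖u‖) * (|b| * ‖v‖) = (a*b)*(-((α+β)*‖u‖*‖v‖)) by
        linear_combination ((α+β)*‖u‖*‖v‖) * habs,
      mul_div_mul_left _ _ (ne_of_lt hneg), div_neg, Real.arccos_neg]
    rw [add_comm β α]
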